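/- Let A be a real M×N matrix such that AA* is invertible, and let γ_m(A) denote its preconditioned restricted isometry constant of order m. Let u, v ∈ ℝ^N be vectors with supp(u) = T′, supp(v) = T″, |T′| ≤ s, |T″| ≤ t, and T′ ∩ T″ = ∅. Then |⟨Au, (AA*)⁻¹Av⟩| ≤ γ_{s+t}(A) · ‖u‖₂ · ‖v‖₂. -/

import Mathlib

open Matrix

/-- The Euclidean (ℓ²) norm of a vector in ℝⁿ. -/
noncomputable def norm2 {n : ℕ} (x : Fin n → ℝ) : ℝ := Real.sqrt (∑ i, x i ^ 2)

/-- `x` is `s`-sparse: it has at most `s` nonzero entries. -/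
def sparse {n : ℕ} (s : ℕ) (x : Fin n → ℝ) : Prop :=
  (Finset.univ.filter fun i => x i ≠ 0).card ≤ s

/-- `restrict T x` is the vector agreeing with `x` on `T` and zero outside `T`. -/
def restrict {n : ℕ} (T : Finset (Fin n)) (x : Fin n → ℝ) : Fin n → ℝ :=
  fun i => if i ∈ T then x i else 0

/-- The preconditioned matrix `(AAᴴ)^{-1/2} A`, where `(AAᴴ)^{-1/2}` is the inverse of the
positive semidefinite square root of `AAᴴ`. -/
noncomputable def precond {M N : ℕ} (A : Matrix (Fin M) (Fin N) ℝ) :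
    Matrix (Fin M) (Fin N) ℝ :=
  ((Matrix.posSemidef_self_mul_conjTranspose A).1.eigenvectorUnitary.1 *
      diagonal ((↑) ∘ (√·) ∘ (Matrix.posSemidef_self_mul_conjTranspose A).1.eigenvalues) *
      (star (Matrix.posSemidef_self_mul_conjTranspose A).1.eigenvectorUnitary :
        Matrix (Fin M) (Fin M) ℝ))⁻¹ * A

/-- The preconditioned restricted isometry constant `γ_s(A)`: the smallest `γ ≥ 0` such that
`(1-γ)‖x‖₂² ≤ ‖(AAᴴ)^{-1/2}Ax‖₂²` for all `s`-sparse `x`. -/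
noncomputable def pripConst {M N : ℕ} (A : Matrix (Fin M) (Fin N) ℝ) (s : ℕ) : ℝ :=
  sInf {γ : ℝ | 0 ≤ γ ∧ ∀ x : Fin N → ℝ, sparse s x →
    (1 - γ) * norm2 x ^ 2 ≤ norm2 ((precond A).mulVec x) ^ 2}

/-- The restricted isometry constant `δ_s(B)`: the smallest `δ ≥ 0` such that
`(1-δ)‖x‖₂² ≤ ‖Bx‖₂² ≤ (1+δ)‖x‖₂²` for all `s`-sparse `x`. -/
noncomputable def ripConst {m n : ℕ} (B : Matrix (Fin m) (Fin n) ℝ) (s : ℕ) : ℝ :=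
  sInf {δ : ℝ | 0 ≤ δ ∧ ∀ x : Fin n → ℝ, sparse s x →
    (1 - δ) * norm2 x ^ 2 ≤ norm2 (B.mulVec x) ^ 2 ∧
      norm2 (B.mulVec x) ^ 2 ≤ (1 + δ) * norm2 x ^ 2}

/-- `θ_t(A) = δ_t((AAᴴ)⁻¹A)`. -/
noncomputable def thetaConst {M N : ℕ} (A : Matrix (Fin M) (Fin N) ℝ) (t : ℕ) : ℝ :=
  ripConst ((A * Aᴴ)⁻¹ * A) t

lemma norm2_sq {n : ℕ} (x : Fin n → ℝ) : norm2 x ^ 2 = x ⬝ᵥ x := by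
  rw [norm2, Real.sq_sqrt (by positivity)]
  simp [dotProduct, sq]

lemma dot_self_nonneg {n : ℕ} (x : Fin n → ℝ) : 0 ≤ x ⬝ᵥ x := by
  apply Finset.sum_nonneg; intro i _; exact mul_self_nonneg _

lemma norm2_nonneg {n : ℕ} (x : Fin n → ℝ) : 0 ≤ norm2 x := Real.sqrt_nonneg _

lemma norm2_eq_zero {n : ℕ} {x : Fin n → ℝ} (h : norm2 x = 0) : x = 0 := by
  have hs : (∑ i, x i ^ 2) = 0 := by
    have := Real.sqrt_eq_zero (by positivity : (0:ℝ) ≤ ∑ i, x i ^ 2)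
    rw [norm2] at h
    exact this.mp h
  funext i
  have := (Finset.sum_eq_zero_iff_of_nonneg (fun i _ => sq_nonneg (x i))).mp hs i
    (Finset.mem_univ i)
  exact pow_eq_zero_iff (by norm_num) |>.mp this

lemma pol {n : ℕ} (f g : Fin n → ℝ) :
    (f + g) ⬝ᵥ (f + g) - (f - g) ⬝ᵥ (f - g) = 4 * (f ⬝ᵥ g) := by
  simp only [dotProduct, Finset.mul_sum, ← Finset.sum_sub_distrib]
  apply Finset.sum_congr rfl; intro i _
  simp [Pi.add_apply, Pi.sub_apply]; ring

lemma key_dot {M N : ℕ} (A : Matrix (Fin M) (Fin N) ℝ)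
    (u v : Fin N → ℝ) :
    A.mulVec u ⬝ᵥ (A * Aᴴ)⁻¹.mulVec (A.mulVec v) =
      (precond A).mulVec u ⬝ᵥ (precond A).mulVec v := by
  set S := (Matrix.posSemidef_self_mul_conjTranspose A).1.eigenvectorUnitary.1 *
      diagonal ((↑) ∘ (√·) ∘ (Matrix.posSemidef_self_mul_conjTranspose A).1.eigenvalues) *
      (star (Matrix.posSemidef_self_mul_conjTranspose A).1.eigenvectorUnitary :
        Matrix (Fin M) (Fin M) ℝ) with hSdef
  have hU : (star (Matrix.posSemidef_self_mul_conjTranspose A).1.eigenvectorUnitary :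
        Matrix (Fin M) (Fin M) ℝ) * (Matrix.posSemidef_self_mul_conjTranspose A).1.eigenvectorUnitary.1 = 1 :=
    Unitary.coe_star_mul_self _
  have hDD : diagonal (((↑) ∘ (√·) ∘ (Matrix.posSemidef_self_mul_conjTranspose A).1.eigenvalues : Fin M → ℝ)) *
      diagonal (((↑) ∘ (√·) ∘ (Matrix.posSemidef_self_mul_conjTranspose A).1.eigenvalues : Fin M → ℝ)) =
      diagonal (RCLike.ofReal ∘ (Matrix.posSemidef_self_mul_conjTranspose A).1.eigenvalues) := by
    rw [diagonal_mul_diagonal]; congr 1; funext i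
    simp only [Function.comp_apply]
    exact Real.mul_self_sqrt ((Matrix.posSemidef_self_mul_conjTranspose A).eigenvalues_nonneg i)
  have hSS : S * S = A * Aᴴ := by
    rw [show S * S = (Matrix.posSemidef_self_mul_conjTranspose A).1.eigenvectorUnitary.1 *
      diagonal ((↑) ∘ (√·) ∘ (Matrix.posSemidef_self_mul_conjTranspose A).1.eigenvalues) *
      ((star (Matrix.posSemidef_self_mul_conjTranspose A).1.eigenvectorUnitary :
        Matrix (Fin M) (Fin M) ℝ) * (Matrix.posSemidef_self_mul_conjTranspose A).1.eigenvectorUnitary.1) *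
      diagonal ((↑) ∘ (√·) ∘ (Matrix.posSemidef_self_mul_conjTranspose A).1.eigenvalues) *
      (star (Matrix.posSemidef_self_mul_conjTranspose A).1.eigenvectorUnitary :
        Matrix (Fin M) (Fin M) ℝ) by simp only [hSdef, Matrix.mul_assoc]]
    rw [hU, Matrix.mul_one, Matrix.mul_assoc _ (diagonal _) (diagonal _), hDD]
    conv_rhs => rw [(Matrix.posSemidef_self_mul_conjTranspose A).1.spectral_theorem, Unitary.conjStarAlgAut_apply]
  have hSsym : Sᵀ = S := by
    simp [hSdef, Matrix.transpose_mul, Matrix.star_eq_conjTranspose,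
      conjTranspose_eq_transpose_of_trivial, Matrix.mul_assoc]
  have hinv : (A * Aᴴ)⁻¹ = S⁻¹ * S⁻¹ := by rw [← hSS, Matrix.mul_inv_rev]
  have hSti : (S⁻¹)ᵀ = S⁻¹ := by rw [Matrix.transpose_nonsing_inv, hSsym]
  rw [hinv, precond, ← hSdef]
  rw [← Matrix.mulVec_mulVec, ← Matrix.mulVec_mulVec, Matrix.dotProduct_mulVec,
    ← Matrix.mulVec_transpose, hSti, Matrix.mulVec_mulVec, Matrix.mulVec_mulVec]

lemma contraction {M N : ℕ} (A : Matrix (Fin M) (Fin N) ℝ) (hA : IsUnit (A * Aᴴ).det)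
    (x : Fin N → ℝ) :
    (precond A).mulVec x ⬝ᵥ (precond A).mulVec x ≤ x ⬝ᵥ x := by
  set B := precond A with hBdef
  have hB : ∀ u v : Fin N → ℝ, A.mulVec u ⬝ᵥ (A * Aᴴ)⁻¹.mulVec (A.mulVec v) =
      B.mulVec u ⬝ᵥ B.mulVec v := fun u v => key_dot A u v
  set P := Aᴴ * ((A * Aᴴ)⁻¹ * A) with hPdef
  have hAt : Aᴴ = Aᵀ := Matrix.conjTranspose_eq_transpose_of_trivial A
  have hPsym : Pᵀ = P := by
    have h1 : (A * Aᴴ)ᵀ = A * Aᴴ := by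
      have := Matrix.isHermitian_mul_conjTranspose_self A
      rwa [Matrix.IsHermitian, Matrix.conjTranspose_eq_transpose_of_trivial] at this
    simp [hPdef, Matrix.transpose_mul, Matrix.transpose_nonsing_inv, h1, hAt,
      Matrix.mul_assoc]
  have hPP : P * P = P := by
    have h2 : A * (Aᴴ * ((A * Aᴴ)⁻¹ * A)) = A := by
      rw [← Matrix.mul_assoc, ← Matrix.mul_assoc, Matrix.mul_nonsing_inv _ hA, Matrix.one_mul]
    rw [hPdef]
    rw [Matrix.mul_assoc, Matrix.mul_assoc, h2]
  have hdot : ∀ y z : Fin N → ℝ, B.mulVec y ⬝ᵥ B.mulVec z = y ⬝ᵥ P.mulVec z := by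
    intro y z
    calc B.mulVec y ⬝ᵥ B.mulVec z
        = A.mulVec y ⬝ᵥ (A * Aᴴ)⁻¹.mulVec (A.mulVec z) := (hB y z).symm
      _ = (y ᵥ* Aᵀ) ⬝ᵥ ((A * Aᴴ)⁻¹.mulVec (A.mulVec z)) := by
          rw [← Matrix.mulVec_transpose, Matrix.transpose_transpose]
      _ = y ⬝ᵥ Aᵀ.mulVec ((A * Aᴴ)⁻¹.mulVec (A.mulVec z)) := (Matrix.dotProduct_mulVec _ _ _).symm
      _ = y ⬝ᵥ P.mulVec z := by
          rw [hPdef, hAt, Matrix.mulVec_mulVec, Matrix.mulVec_mulVec, Matrix.mul_assoc]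
  have hPx : P.mulVec x ⬝ᵥ P.mulVec x = x ⬝ᵥ P.mulVec x := by
    calc P.mulVec x ⬝ᵥ P.mulVec x
        = (P.mulVec x ᵥ* P) ⬝ᵥ x := Matrix.dotProduct_mulVec _ _ _
      _ = (Pᵀ.mulVec (P.mulVec x)) ⬝ᵥ x := by rw [Matrix.mulVec_transpose]
      _ = ((Pᵀ * P).mulVec x) ⬝ᵥ x := by rw [Matrix.mulVec_mulVec]
      _ = (P.mulVec x) ⬝ᵥ x := by rw [hPsym, hPP]
      _ = x ⬝ᵥ P.mulVec x := dotProduct_comm _ _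
  set c := x ⬝ᵥ P.mulVec x with hc
  have hc0 : 0 ≤ c := by rw [hc, ← hdot x x]; exact dot_self_nonneg _
  have hcs : c ^ 2 ≤ (x ⬝ᵥ x) * c := by
    calc c ^ 2 = (∑ i, x i * P.mulVec x i) ^ 2 := by rw [hc]; rfl
      _ ≤ (∑ i, x i ^ 2) * ∑ i, P.mulVec x i ^ 2 :=
          Finset.sum_mul_sq_le_sq_mul_sq _ _ _
      _ = (x ⬝ᵥ x) * (P.mulVec x ⬝ᵥ P.mulVec x) := by simp [dotProduct, sq]
      _ = (x ⬝ᵥ x) * c := by rw [hPx]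
  rw [hdot x x]
  nlinarith [dot_self_nonneg x]

lemma core {M N : ℕ} (A : Matrix (Fin M) (Fin N) ℝ) (hA : IsUnit (A * Aᴴ).det)
    (s t : ℕ) (u v : Fin N → ℝ) (T' T'' : Finset (Fin N))
    (hu : ∀ i, u i ≠ 0 ↔ i ∈ T') (hv : ∀ i, v i ≠ 0 ↔ i ∈ T'')
    (hT' : T'.card ≤ s) (hT'' : T''.card ≤ t) (hdisj : Disjoint T' T'')
    (ha : 0 < norm2 u) (hb : 0 < norm2 v)
    (γ : ℝ) (hγ0 : 0 ≤ γ)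
    (hγ : ∀ x : Fin N → ℝ, sparse (s+t) x →
      (1 - γ) * norm2 x ^ 2 ≤ norm2 ((precond A).mulVec x) ^ 2) :
    |(precond A).mulVec u ⬝ᵥ (precond A).mulVec v| ≤ γ * norm2 u * norm2 v := by
  set B := precond A with hBdef
  set a := norm2 u with hadef
  set b := norm2 v with hbdef
  set x := b • u with hxdef
  set y := a • v with hydef
  -- supports
  have hsupp : ∀ w : Fin N → ℝ, (∀ i, w i ≠ 0 → i ∈ T' ∪ T'') → sparse (s+t) w := by
    intro w hw
    unfold sparse
    calc (Finset.univ.filter fun i => w i ≠ 0).card ≤ (T' ∪ T'').card := by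
          apply Finset.card_le_card
          intro i hi
          exact hw i (Finset.mem_filter.mp hi).2
      _ ≤ T'.card + T''.card := Finset.card_union_le _ _
      _ ≤ s + t := Nat.add_le_add hT' hT''
  have hxy_sp : sparse (s+t) (x + y) := by
    apply hsupp
    intro i hi
    by_cases h : u i = 0
    · have : v i ≠ 0 := by
        intro hv0
        apply hi
        simp [hxdef, hydef, h, hv0]
      exact Finset.mem_union_right _ ((hv i).mp this)
    · exact Finset.mem_union_left _ ((hu i).mp h)
  have hxy_sp' : sparse (s+t) (x - y) := by
    apply hsupp
    intro i hi
    by_cases h : u i = 0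
    · have : v i ≠ 0 := by
        intro hv0
        apply hi
        simp [hxdef, hydef, h, hv0]
      exact Finset.mem_union_right _ ((hv i).mp this)
    · exact Finset.mem_union_left _ ((hu i).mp h)
  -- dot products
  have huv : u ⬝ᵥ v = 0 := by
    apply Finset.sum_eq_zero
    intro i _
    by_cases h : u i = 0
    · simp [h]
    · have hi' : i ∈ T' := (hu i).mp h
      have : i ∉ T'' := Finset.disjoint_left.mp hdisj hi'
      have : v i = 0 := by
        by_contra hv0
        exact this ((hv i).mp hv0)
      simp [this]
  have huu : u ⬝ᵥ u = a ^ 2 := (norm2_sq u).symm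
  have hvv : v ⬝ᵥ v = b ^ 2 := (norm2_sq v).symm
  have hxpy : (x + y) ⬝ᵥ (x + y) = 2 * (a * b) ^ 2 := by
    simp only [hxdef, hydef, dotProduct, Pi.add_apply, Pi.smul_apply, smul_eq_mul]
    have : ∀ i, (b * u i + a * v i) * (b * u i + a * v i) =
        b^2 * (u i * u i) + a^2 * (v i * v i) + 2*a*b*(u i * v i) := by intro i; ring
    simp only [this, Finset.sum_add_distrib, ← Finset.mul_sum]
    simp only [dotProduct] at huv huu hvv
    rw [huv, huu, hvv]; ring
  have hxmy : (x - y) ⬝ᵥ (x - y) = 2 * (a * b) ^ 2 := by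
    simp only [hxdef, hydef, dotProduct, Pi.sub_apply, Pi.smul_apply, smul_eq_mul]
    have : ∀ i, (b * u i - a * v i) * (b * u i - a * v i) =
        b^2 * (u i * u i) + a^2 * (v i * v i) - 2*a*b*(u i * v i) := by intro i; ring
    simp only [this]
    rw [Finset.sum_sub_distrib, Finset.sum_add_distrib, ← Finset.mul_sum, ← Finset.mul_sum,
      ← Finset.mul_sum]
    simp only [dotProduct] at huv huu hvv
    rw [huv, huu, hvv]; ring
  -- bounds
  have hlow : (1 - γ) * (2 * (a*b)^2) ≤ B.mulVec (x - y) ⬝ᵥ B.mulVec (x - y) := by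
    have := hγ (x - y) hxy_sp'
    rwa [norm2_sq, norm2_sq, hxmy] at this
  have hlow' : (1 - γ) * (2 * (a*b)^2) ≤ B.mulVec (x + y) ⬝ᵥ B.mulVec (x + y) := by
    have := hγ (x + y) hxy_sp
    rwa [norm2_sq, norm2_sq, hxpy] at this
  have hup : B.mulVec (x + y) ⬝ᵥ B.mulVec (x + y) ≤ 2 * (a*b)^2 := by
    have := contraction A hA (x + y)
    rwa [hxpy] at this
  have hup' : B.mulVec (x - y) ⬝ᵥ B.mulVec (x - y) ≤ 2 * (a*b)^2 := by
    have := contraction A hA (x - y)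
    rwa [hxmy] at this
  -- polarization
  have hpol : B.mulVec (x + y) ⬝ᵥ B.mulVec (x + y) - B.mulVec (x - y) ⬝ᵥ B.mulVec (x - y)
      = 4 * (a * b * (B.mulVec u ⬝ᵥ B.mulVec v)) := by
    rw [Matrix.mulVec_add, Matrix.mulVec_sub, pol]
    rw [hxdef, hydef, Matrix.mulVec_smul, Matrix.mulVec_smul, smul_dotProduct,
      dotProduct_smul]
    simp [smul_eq_mul]; ring
  set e := B.mulVec u ⬝ᵥ B.mulVec v with hedef
  have hab : 0 < a * b := mul_pos ha hb
  rw [abs_le]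
  constructor
  · nlinarith
  · nlinarith

theorem stmt2 {M N : ℕ} (A : Matrix (Fin M) (Fin N) ℝ) (hA : IsUnit (A * Aᴴ).det)
    (s t : ℕ) (u v : Fin N → ℝ) (T' T'' : Finset (Fin N))
    (hu : ∀ i, u i ≠ 0 ↔ i ∈ T') (hv : ∀ i, v i ≠ 0 ↔ i ∈ T'')
    (hT' : T'.card ≤ s) (hT'' : T''.card ≤ t) (hdisj : Disjoint T' T'') :
    |A.mulVec u ⬝ᵥ (A * Aᴴ)⁻¹.mulVec (A.mulVec v)| ≤
      pripConst A (s + t) * norm2 u * norm2 v := by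
  set Sset := {γ : ℝ | 0 ≤ γ ∧ ∀ x : Fin N → ℝ, sparse (s+t) x →
    (1 - γ) * norm2 x ^ 2 ≤ norm2 ((precond A).mulVec x) ^ 2} with hSsetdef
  have hprip : pripConst A (s + t) = sInf Sset := rfl
  have hne : (1:ℝ) ∈ Sset := by
    constructor
    · exact zero_le_one
    · intro x _
      rw [sub_self, zero_mul]
      exact sq_nonneg _
  have hγ0 : 0 ≤ sInf Sset := Real.sInf_nonneg (fun γ hγ => hγ.1)
  by_cases ha : norm2 u = 0
  · have hu0 : u = 0 := norm2_eq_zero ha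
    rw [hu0, Matrix.mulVec_zero, zero_dotProduct]
    have : norm2 (0 : Fin N → ℝ) = 0 := by simp [norm2]
    rw [this]
    simp
  by_cases hb : norm2 v = 0
  · have hv0 : v = 0 := norm2_eq_zero hb
    rw [hv0, Matrix.mulVec_zero, Matrix.mulVec_zero, dotProduct_zero]
    have : norm2 (0 : Fin N → ℝ) = 0 := by simp [norm2]
    rw [this]
    simp
  have ha' : 0 < norm2 u := lt_of_le_of_ne (norm2_nonneg u) (Ne.symm ha)
  have hb' : 0 < norm2 v := lt_of_le_of_ne (norm2_nonneg v) (Ne.symm hb)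
  have hab : 0 < norm2 u * norm2 v := mul_pos ha' hb'
  have key : ∀ γ' ∈ Sset, |A.mulVec u ⬝ᵥ (A * Aᴴ)⁻¹.mulVec (A.mulVec v)| ≤
      γ' * (norm2 u * norm2 v) := by
    intro γ' hγ'
    rw [key_dot A u v]
    have := core A hA s t u v T' T'' hu hv hT' hT'' hdisj ha' hb' γ' hγ'.1 hγ'.2
    linarith [this]
  have hdiv : |A.mulVec u ⬝ᵥ (A * Aᴴ)⁻¹.mulVec (A.mulVec v)| / (norm2 u * norm2 v)
      ≤ sInf Sset := by
    apply le_csInf ⟨1, hne⟩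
    intro γ' hγ'
    exact (div_le_iff₀ hab).mpr (key γ' hγ')
  rw [hprip, mul_assoc]
  exact (div_le_iff₀ hab).mp hdiv
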